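/- Let A be a positive operator on H and T₁, T₂, S₁, S₂ A-bounded operators. Then r_A(T₁S₁ + T₂S₂) ≤ ½[‖S₁T₁‖_A + ‖S₂T₂‖_A + √((‖S₁T₁‖_A − ‖S₂T₂‖_A)² + 4‖S₁T₂‖_A ‖S₂T₁‖_A)]. -/

import Mathlib

open ContinuousLinearMap

variable {H : Type*} [NormedAddCommGroup H] [InnerProductSpace ℂ H] [CompleteSpace H]

/-- The seminorm `‖x‖_A = ‖A^{1/2} x‖ = √⟨Ax, x⟩` induced by a positive operator `A`. -/
noncomputable def anorm (A : H →L[ℂ] H) (x : H) : ℝ :=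
  Real.sqrt (A.reApplyInnerSelf x)

/-- `T` is `A`-bounded: `‖Tx‖_A ≤ c ‖x‖_A` for some `c > 0`. -/
def ABounded (A T : H →L[ℂ] H) : Prop :=
  ∃ c : ℝ, 0 < c ∧ ∀ x : H, anorm A (T x) ≤ c * anorm A x

/-- The operator seminorm `‖T‖_A`: the least `c ≥ 0` with `‖Tx‖_A ≤ c ‖x‖_A` for all `x`. -/
noncomputable def aNorm (A T : H →L[ℂ] H) : ℝ :=
  sInf {c : ℝ | 0 ≤ c ∧ ∀ x : H, anorm A (T x) ≤ c * anorm A x}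

/-- The `A`-spectral radius `r_A(T) = inf_{n ≥ 1} ‖T^n‖_A^{1/n}`. -/
noncomputable def aSpecRad (A T : H →L[ℂ] H) : ℝ :=
  ⨅ n : ℕ+, aNorm A (T ^ (n : ℕ)) ^ ((n : ℝ)⁻¹)

/-- The `A`-numerical radius `ω_A(T) = sup {|⟨ATx, x⟩| : ‖x‖_A = 1}`. -/
noncomputable def aNumRad (A T : H →L[ℂ] H) : ℝ :=
  sSup {c : ℝ | ∃ x : H, anorm A x = 1 ∧ c = ‖(inner ℂ (A (T x)) x : ℂ)‖}


lemma anorm_nonneg (A : H →L[ℂ] H) (x : H) : 0 ≤ anorm A x := Real.sqrt_nonneg _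

lemma anorm_sq {A : H →L[ℂ] H} (hA : A.IsPositive) (x : H) :
    anorm A x ^ 2 = A.reApplyInnerSelf x := Real.sq_sqrt (hA.2 x)

lemma reApply_add {A : H →L[ℂ] H} (hA : A.IsPositive) (x y : H) :
    A.reApplyInnerSelf (x + y) = A.reApplyInnerSelf x
      + 2 * RCLike.re (inner ℂ (A x) y : ℂ) + A.reApplyInnerSelf y := by
  have hsym := hA.1
  have h1 : RCLike.re (inner ℂ (A y) x : ℂ) = RCLike.re (inner ℂ (A x) y : ℂ) := by
    have h := hsym y x
    simp only [ContinuousLinearMap.coe_coe] at h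
    rw [h, inner_re_symm]
  simp only [reApplyInnerSelf, map_add, inner_add_left, inner_add_right, map_add]
  rw [h1]; ring

lemma cs {A : H →L[ℂ] H} (hA : A.IsPositive) (x y : H) :
    RCLike.re (inner ℂ (A x) y : ℂ) ≤ anorm A x * anorm A y := by
  set p := A.reApplyInnerSelf x with hp
  set q := A.reApplyInnerSelf y with hqq
  set s := RCLike.re (inner ℂ (A x) y : ℂ) with hs
  have key : ∀ t : ℝ, 0 ≤ p + 2 * t * s + t ^ 2 * q := by
    intro t
    have h0 := hA.2 (x + (t : ℂ) • y)
    have e1 : A.reApplyInnerSelf ((t:ℂ) • y) = t ^ 2 * q := by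
      simp only [reApplyInnerSelf, map_smul, inner_smul_left, inner_smul_right,
        Complex.conj_ofReal, hqq]
      simp only [RCLike.re_to_complex, Complex.mul_re, Complex.ofReal_re, Complex.ofReal_im,
        Complex.mul_im]
      ring
    have e2 : RCLike.re (inner ℂ (A x) ((t:ℂ) • y) : ℂ) = t * s := by
      rw [inner_smul_right]
      simp only [RCLike.re_to_complex, Complex.mul_re, Complex.ofReal_re, Complex.ofReal_im, hs]
      ring
    rw [reApply_add hA, e1, e2] at h0
    linarith [h0]
  have hp0 : 0 ≤ p := hA.2 x
  have hq0 : 0 ≤ q := hA.2 y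
  have hs2 : s ^ 2 ≤ p * q := by
    rcases eq_or_lt_of_le hq0 with hq | hq
    · have hs0 : s = 0 := by
        by_contra hne
        have h1 := key (-(p + 1) / (2 * s))
        rw [← hq] at h1
        have h2 : 2 * (-(p + 1) / (2 * s)) * s = -(p + 1) := by field_simp; try ring
        rw [h2] at h1
        simp at h1
        linarith
      rw [hs0]; nlinarith
    · have h1 := key (-s / q)
      have hq' : q ≠ 0 := ne_of_gt hq
      have h2 : 2 * (-s / q) * s + (-s / q) ^ 2 * q = -(s ^ 2) / q := by
        field_simp; try ring
      have h3 : 0 ≤ (p - s ^ 2 / q) * q := by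
        apply mul_nonneg _ hq.le
        have h2b : p + (2 * (-s / q) * s + (-s / q) ^ 2 * q) = p - s^2/q := by rw [h2]; try ring
        linarith [h1, h2b]
      have h4 : (p - s ^ 2 / q) * q = p * q - s ^ 2 := by field_simp; try ring
      linarith
  calc s ≤ |s| := le_abs_self s
    _ ≤ Real.sqrt (p * q) := by
        rw [← Real.sqrt_sq_eq_abs]
        exact Real.sqrt_le_sqrt hs2
    _ = anorm A x * anorm A y := Real.sqrt_mul hp0 q

lemma anorm_add_le {A : H →L[ℂ] H} (hA : A.IsPositive) (x y : H) :
    anorm A (x + y) ≤ anorm A x + anorm A y := by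
  have hcs := cs hA x y
  have h2 : A.reApplyInnerSelf (x + y) ≤ (anorm A x + anorm A y) ^ 2 := by
    rw [reApply_add hA]
    have e1 := anorm_sq hA x
    have e2 := anorm_sq hA y
    nlinarith [anorm_nonneg A x, anorm_nonneg A y]
  calc anorm A (x + y) = Real.sqrt (A.reApplyInnerSelf (x + y)) := rfl
    _ ≤ Real.sqrt ((anorm A x + anorm A y) ^ 2) := Real.sqrt_le_sqrt h2
    _ = anorm A x + anorm A y := Real.sqrt_sq (add_nonneg (anorm_nonneg A x) (anorm_nonneg A y))


lemma aNorm_nonneg (A T : H →L[ℂ] H) : 0 ≤ aNorm A T :=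
  Real.sInf_nonneg fun _ hc => hc.1

lemma aNorm_le {A T : H →L[ℂ] H} {c : ℝ} (h0 : 0 ≤ c)
    (h : ∀ x, anorm A (T x) ≤ c * anorm A x) : aNorm A T ≤ c :=
  csInf_le ⟨0, fun _ hb => hb.1⟩ ⟨h0, h⟩

lemma aNorm_spec {A T : H →L[ℂ] H} (hT : ABounded A T) (x : H) :
    anorm A (T x) ≤ aNorm A T * anorm A x := by
  have hne : {c : ℝ | 0 ≤ c ∧ ∀ x, anorm A (T x) ≤ c * anorm A x}.Nonempty := by
    obtain ⟨c, hc, h⟩ := hT; exact ⟨c, hc.le, h⟩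
  have hbdd : BddBelow {c : ℝ | 0 ≤ c ∧ ∀ x, anorm A (T x) ≤ c * anorm A x} :=
    ⟨0, fun _ hb => hb.1⟩
  have hcl : IsClosed {c : ℝ | 0 ≤ c ∧ ∀ x, anorm A (T x) ≤ c * anorm A x} := by
    have he : {c : ℝ | 0 ≤ c ∧ ∀ x, anorm A (T x) ≤ c * anorm A x}
        = Set.Ici 0 ∩ ⋂ x, {c : ℝ | anorm A (T x) ≤ c * anorm A x} := by
      ext c; simp [Set.mem_iInter, Set.mem_Ici]
    rw [he]
    exact isClosed_Ici.inter (isClosed_iInter fun x =>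
      isClosed_le continuous_const (continuous_id.mul continuous_const))
  exact (hcl.csInf_mem hne hbdd).2 x

lemma ABounded.mul {A T S : H →L[ℂ] H} (hT : ABounded A T) (hS : ABounded A S) :
    ABounded A (T * S) := by
  obtain ⟨c, hc, h⟩ := hT; obtain ⟨d, hd, h'⟩ := hS
  refine ⟨c * d, mul_pos hc hd, fun x => ?_⟩
  calc anorm A ((T * S) x) = anorm A (T (S x)) := rfl
    _ ≤ c * anorm A (S x) := h _
    _ ≤ c * (d * anorm A x) := by
        exact mul_le_mul_of_nonneg_left (h' x) hc.le
    _ = c * d * anorm A x := by ring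

lemma ABounded.add {A : H →L[ℂ] H} (hA : A.IsPositive) {T S : H →L[ℂ] H}
    (hT : ABounded A T) (hS : ABounded A S) : ABounded A (T + S) := by
  obtain ⟨c, hc, h⟩ := hT; obtain ⟨d, hd, h'⟩ := hS
  refine ⟨c + d, by linarith, fun x => ?_⟩
  calc anorm A ((T + S) x) = anorm A (T x + S x) := rfl
    _ ≤ anorm A (T x) + anorm A (S x) := anorm_add_le hA _ _
    _ ≤ c * anorm A x + d * anorm A x := add_le_add (h x) (h' x)
    _ = (c + d) * anorm A x := by ring

lemma aNorm_mul_le {A T S : H →L[ℂ] H} (hT : ABounded A T) (hS : ABounded A S) :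
    aNorm A (T * S) ≤ aNorm A T * aNorm A S := by
  refine aNorm_le (mul_nonneg (aNorm_nonneg A T) (aNorm_nonneg A S)) fun x => ?_
  calc anorm A ((T * S) x) = anorm A (T (S x)) := rfl
    _ ≤ aNorm A T * anorm A (S x) := aNorm_spec hT _
    _ ≤ aNorm A T * (aNorm A S * anorm A x) :=
        mul_le_mul_of_nonneg_left (aNorm_spec hS x) (aNorm_nonneg A T)
    _ = aNorm A T * aNorm A S * anorm A x := by ring

lemma aNorm_add_le' {A : H →L[ℂ] H} (hA : A.IsPositive) {T S : H →L[ℂ] H}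
    (hT : ABounded A T) (hS : ABounded A S) :
    aNorm A (T + S) ≤ aNorm A T + aNorm A S := by
  refine aNorm_le (add_nonneg (aNorm_nonneg A T) (aNorm_nonneg A S)) fun x => ?_
  calc anorm A ((T + S) x) = anorm A (T x + S x) := rfl
    _ ≤ anorm A (T x) + anorm A (S x) := anorm_add_le hA _ _
    _ ≤ aNorm A T * anorm A x + aNorm A S * anorm A x :=
        add_le_add (aNorm_spec hT x) (aNorm_spec hS x)
    _ = (aNorm A T + aNorm A S) * anorm A x := by ring


lemma specRad_le_of_bound (A X : H →L[ℂ] H) {C lam : ℝ} (hC : 0 < C) (hlam : 0 < lam)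
    (h : ∀ n : ℕ, aNorm A (X ^ (n + 2)) ≤ C * lam ^ (n + 1)) : aSpecRad A X ≤ lam := by
  have hb : BddBelow (Set.range fun n : ℕ+ => aNorm A (X ^ (n : ℕ)) ^ ((n : ℝ)⁻¹)) := by
    refine ⟨0, ?_⟩
    rintro _ ⟨n, rfl⟩
    exact Real.rpow_nonneg (aNorm_nonneg A _) _
  have key : ∀ n : ℕ, aSpecRad A X ≤ (C * lam ^ (n + 1)) ^ (((n : ℝ) + 2)⁻¹) := by
    intro n
    have h1 : aSpecRad A X ≤ aNorm A (X ^ (((⟨n + 2, by omega⟩ : ℕ+) : ℕ))) ^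
        (((((⟨n + 2, by omega⟩ : ℕ+)) : ℝ))⁻¹) := ciInf_le hb _
    have h2 : (((⟨n + 2, by omega⟩ : ℕ+) : ℕ)) = n + 2 := rfl
    calc aSpecRad A X ≤ aNorm A (X ^ (n + 2)) ^ (((n : ℝ) + 2)⁻¹) := by
          convert h1 using 3 <;> push_cast [h2] <;> norm_num
      _ ≤ (C * lam ^ (n + 1)) ^ (((n : ℝ) + 2)⁻¹) :=
          Real.rpow_le_rpow (aNorm_nonneg A _) (h n) (by positivity)
  have heq : ∀ n : ℕ, (C * lam ^ (n + 1)) ^ (((n : ℝ) + 2)⁻¹)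
      = Real.exp (Real.log lam + (Real.log C - Real.log lam) * ((n : ℝ) + 2)⁻¹) := by
    intro n
    have hpos : (0 : ℝ) < C * lam ^ (n + 1) := by positivity
    rw [Real.rpow_def_of_pos hpos, Real.log_mul (ne_of_gt hC) (by positivity),
      Real.log_pow]
    congr 1
    have hne : ((n : ℝ) + 2) ≠ 0 := by positivity
    field_simp
    push_cast
    ring
  have htend : Filter.Tendsto (fun n : ℕ => (C * lam ^ (n + 1)) ^ (((n : ℝ) + 2)⁻¹))
      Filter.atTop (nhds lam) := by
    simp only [heq]
    have h0 : Filter.Tendsto (fun n : ℕ => ((n : ℝ) + 2)⁻¹) Filter.atTop (nhds 0) := by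
      apply Filter.Tendsto.inv_tendsto_atTop
      exact Filter.tendsto_atTop_add_const_right _ _ tendsto_natCast_atTop_atTop
    have h1 : Filter.Tendsto
        (fun n : ℕ => Real.log lam + (Real.log C - Real.log lam) * ((n : ℝ) + 2)⁻¹)
        Filter.atTop (nhds (Real.log lam + (Real.log C - Real.log lam) * 0)) :=
      Filter.Tendsto.add tendsto_const_nhds (Filter.Tendsto.const_mul _ h0)
    rw [mul_zero, add_zero] at h1
    have := (Real.continuous_exp.tendsto _).comp h1
    rwa [Real.exp_log hlam] at this
  exact ge_of_tendsto' htend key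

lemma ring1 {R : Type*} [Ring R] (t1 t2 s1 s2 : R) :
    (t1 * s1 + t2 * s2) * (t1 * s1 + t2 * s2) =
      t1 * (s1 * t1) * s1 + t1 * (s1 * t2) * s2 + t2 * (s2 * t1) * s1 + t2 * (s2 * t2) * s2 := by
  noncomm_ring

lemma ring2 {R : Type*} [Ring R] (t1 t2 s1 s2 g11 g10 g01 g00 : R) :
    (t1 * g11 * s1 + t1 * g10 * s2 + t2 * g01 * s1 + t2 * g00 * s2) * (t1 * s1 + t2 * s2) =
      t1 * (g11 * (s1 * t1) + g10 * (s2 * t1)) * s1 +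
      t1 * (g11 * (s1 * t2) + g10 * (s2 * t2)) * s2 +
      t2 * (g01 * (s1 * t1) + g00 * (s2 * t1)) * s1 +
      t2 * (g01 * (s1 * t2) + g00 * (s2 * t2)) * s2 := by
  noncomm_ring

set_option maxHeartbeats 1000000 in
theorem stmt9 (A T₁ T₂ S₁ S₂ : H →L[ℂ] H) (hA : A.IsPositive)
    (hT₁ : ABounded A T₁) (hT₂ : ABounded A T₂)
    (hS₁ : ABounded A S₁) (hS₂ : ABounded A S₂) :
    aSpecRad A (T₁ * S₁ + T₂ * S₂) ≤
      (aNorm A (S₁ * T₁) + aNorm A (S₂ * T₂) +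
        Real.sqrt ((aNorm A (S₁ * T₁) - aNorm A (S₂ * T₂)) ^ 2 +
          4 * aNorm A (S₁ * T₂) * aNorm A (S₂ * T₁))) / 2 := by
  set X : H →L[ℂ] H := T₁ * S₁ + T₂ * S₂ with hX
  set a := aNorm A (S₁ * T₁) with ha
  set b := aNorm A (S₁ * T₂) with hb
  set c := aNorm A (S₂ * T₁) with hc
  set d := aNorm A (S₂ * T₂) with hd
  have ha0 : 0 ≤ a := aNorm_nonneg A _
  have hb0 : 0 ≤ b := aNorm_nonneg A _
  have hc0 : 0 ≤ c := aNorm_nonneg A _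
  have hd0 : 0 ≤ d := aNorm_nonneg A _
  set lamf : ℝ → ℝ := fun ε =>
    (a + d + 2 * ε + Real.sqrt ((a - d) ^ 2 + 4 * (b + ε) * (c + ε))) / 2 with hlamf
  have main : ∀ ε : ℝ, 0 < ε → aSpecRad A X ≤ lamf ε := by
    intro ε hε
    set q := Real.sqrt ((a - d) ^ 2 + 4 * (b + ε) * (c + ε)) with hqdef
    have hq2 : q ^ 2 = (a - d) ^ 2 + 4 * (b + ε) * (c + ε) :=
      Real.sq_sqrt (by positivity)
    have hq0 : 0 ≤ q := Real.sqrt_nonneg _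
    set lam := (a + d + 2 * ε + q) / 2 with hlamdef
    have hlam2 : 2 * lam = a + d + 2 * ε + q := by rw [hlamdef]; ring
    have hbe : 0 < b + ε := by linarith
    have hce : 0 < c + ε := by linarith
    have hlam_pos : 0 < lam := by nlinarith [hq0]
    have hv2 : 0 < lam - (a + ε) := by
      nlinarith [hq2, hq0, mul_pos hbe hce, sq_nonneg (q - (a - d)), sq_nonneg (q + (a - d))]
    have hchar : lam ^ 2 - (a + d + 2 * ε) * lam + (a + ε) * (d + ε) - (b + ε) * (c + ε) = 0 := by
      nlinarith [hq2, hlam2]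
    -- the Bool-indexed data
    set TT : Bool → (H →L[ℂ] H) := fun i => cond i T₁ T₂ with hTT
    set SS : Bool → (H →L[ℂ] H) := fun i => cond i S₁ S₂ with hSS
    set NN : Bool → Bool → (H →L[ℂ] H) := fun i j => SS i * TT j with hNN
    set v : Bool → ℝ := fun i => cond i (b + ε) (lam - (a + ε)) with hv
    have hvpos : ∀ i, 0 < v i := by
      intro i; cases i <;> simp [hv] <;> linarith
    have hTTb : ∀ i, ABounded A (TT i) := by intro i; cases i <;> simpa [hTT]
    have hSSb : ∀ i, ABounded A (SS i) := by intro i; cases i <;> simpa [hSS]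
    have hNNb : ∀ i j, ABounded A (NN i j) := fun i j => (hSSb i).mul (hTTb j)
    have E1 : a * (b + ε) + b * (lam - (a + ε)) ≤ lam * (b + ε) := by
      nlinarith [mul_pos hε hbe, mul_pos hε hv2]
    have E2 : c * (b + ε) + d * (lam - (a + ε)) ≤ lam * (lam - (a + ε)) := by
      nlinarith [hchar, mul_pos hε hbe, mul_pos hε hv2]
    have base : ∀ i, aNorm A (NN i true) * v true + aNorm A (NN i false) * v false
        ≤ lam * v i := by
      intro i; cases i <;> simp only [hNN, hTT, hSS, hv, cond_true, cond_false]
      · exact E2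
      · exact E1
    have key : ∀ n : ℕ, ∃ G : Bool → Bool → (H →L[ℂ] H),
        (X ^ (n + 2) = TT true * G true true * SS true + TT true * G true false * SS false +
          TT false * G false true * SS true + TT false * G false false * SS false) ∧
        (∀ i j, ABounded A (G i j)) ∧
        (∀ i, aNorm A (G i true) * v true + aNorm A (G i false) * v false
          ≤ lam ^ (n + 1) * v i) := by
      intro n
      induction n with
      | zero =>
        refine ⟨NN, ?_, hNNb, ?_⟩
        · show X ^ 2 = _
          rw [pow_two, hX]
          simp only [hNN, hTT, hSS, cond_true, cond_false]
          exact ring1 T₁ T₂ S₁ S₂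
        · intro i; rw [pow_one]; exact base i
      | succ m ih =>
        obtain ⟨G, hGeq, hGb, hGe⟩ := ih
        refine ⟨fun i k => G i true * NN true k + G i false * NN false k, ?_, ?_, ?_⟩
        · rw [show m + 1 + 2 = (m + 2) + 1 from rfl, pow_succ, hGeq]
          rw [hX]
          simp only [hNN, hTT, hSS, cond_true, cond_false]
          exact ring2 T₁ T₂ S₁ S₂ _ _ _ _
        · intro i j
          exact ((hGb i true).mul (hNNb true j)).add hA ((hGb i false).mul (hNNb false j))
        · intro i
          have n1 : ∀ k, aNorm A (G i true * NN true k + G i false * NN false k) ≤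
              aNorm A (G i true) * aNorm A (NN true k) +
              aNorm A (G i false) * aNorm A (NN false k) := by
            intro k
            calc aNorm A (G i true * NN true k + G i false * NN false k)
                ≤ aNorm A (G i true * NN true k) + aNorm A (G i false * NN false k) :=
                  aNorm_add_le' hA ((hGb i true).mul (hNNb true k))
                    ((hGb i false).mul (hNNb false k))
              _ ≤ _ := add_le_add (aNorm_mul_le (hGb i true) (hNNb true k))
                    (aNorm_mul_le (hGb i false) (hNNb false k))
          have g1 : 0 ≤ aNorm A (G i true) := aNorm_nonneg A _
          have g2 : 0 ≤ aNorm A (G i false) := aNorm_nonneg A _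
          have b1 := base true
          have b2 := base false
          have ihe := hGe i
          have hvt := hvpos true
          have hvf := hvpos false
          have hp1 := mul_le_mul_of_nonneg_right (n1 true) hvt.le
          have hp2 := mul_le_mul_of_nonneg_right (n1 false) hvf.le
          have hp3 := mul_le_mul_of_nonneg_left b1 g1
          have hp4 := mul_le_mul_of_nonneg_left b2 g2
          have hp5 := mul_le_mul_of_nonneg_left ihe hlam_pos.le
          calc aNorm A (G i true * NN true true + G i false * NN false true) * v true +
                aNorm A (G i true * NN true false + G i false * NN false false) * v false
              ≤ lam * (aNorm A (G i true) * v true + aNorm A (G i false) * v false) := by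
                linarith [hp1, hp2, hp3, hp4]
            _ ≤ lam * (lam ^ (m + 1) * v i) := hp5
            _ = lam ^ (m + 1 + 1) * v i := by ring
    -- convert the eigen bound into a bound on aNorm (X ^ (n+2))
    set Kv := (v true + v false) / v true + (v true + v false) / v false with hKv
    have hvt := hvpos true
    have hvf := hvpos false
    have hKvpos : 0 < Kv := by
      rw [hKv]; positivity
    have hK : ∀ i j, v i / v j ≤ Kv := by
      intro i j
      have hle : v i ≤ v true + v false := by cases i <;> linarith
      have hstep : v i / v j ≤ (v true + v false) / v j :=
        (div_le_div_iff_of_pos_right (hvpos j)).mpr hle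
      have hnn1 : 0 ≤ (v true + v false) / v true := div_nonneg (by linarith) hvt.le
      have hnn2 : 0 ≤ (v true + v false) / v false := div_nonneg (by linarith) hvf.le
      cases j
      · calc v i / v false ≤ (v true + v false) / v false := hstep
          _ ≤ Kv := by rw [hKv]; linarith
      · calc v i / v true ≤ (v true + v false) / v true := hstep
          _ ≤ Kv := by rw [hKv]; linarith
    set Cst := (aNorm A T₁ + aNorm A T₂) * (aNorm A S₁ + aNorm A S₂) * Kv + 1 with hCst
    have hCpos : 0 < Cst := by
      rw [hCst]
      have h1 := aNorm_nonneg A T₁; have h2 := aNorm_nonneg A T₂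
      have h3 := aNorm_nonneg A S₁; have h4 := aNorm_nonneg A S₂
      nlinarith [mul_nonneg (mul_nonneg (add_nonneg h1 h2) (add_nonneg h3 h4)) hKvpos.le]
    have hbound : ∀ n : ℕ, aNorm A (X ^ (n + 2)) ≤ Cst * lam ^ (n + 1) := by
      intro n
      obtain ⟨G, hGeq, hGb, hGe⟩ := key n
      have hlp : 0 < lam ^ (n + 1) := pow_pos hlam_pos _
      have hGij : ∀ i j, aNorm A (G i j) ≤ lam ^ (n + 1) * Kv := by
        intro i j
        have h1 : aNorm A (G i j) * v j ≤ lam ^ (n + 1) * v i := by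
          have hh := hGe i
          cases j
          · linarith [mul_nonneg (aNorm_nonneg A (G i true)) hvt.le]
          · linarith [mul_nonneg (aNorm_nonneg A (G i false)) hvf.le]
        have h2 : aNorm A (G i j) ≤ lam ^ (n + 1) * (v i / v j) := by
          have he : lam ^ (n + 1) * (v i / v j) = lam ^ (n + 1) * v i / v j := by ring
          rw [he, le_div_iff₀ (hvpos j)]
          exact h1
        calc aNorm A (G i j) ≤ lam ^ (n + 1) * (v i / v j) := h2
          _ ≤ lam ^ (n + 1) * Kv := mul_le_mul_of_nonneg_left (hK i j) hlp.le
      have hterm : ∀ i j, aNorm A (TT i * G i j * SS j) ≤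
          aNorm A (TT i) * aNorm A (SS j) * (lam ^ (n + 1) * Kv) := by
        intro i j
        calc aNorm A (TT i * G i j * SS j)
            ≤ aNorm A (TT i * G i j) * aNorm A (SS j) :=
              aNorm_mul_le ((hTTb i).mul (hGb i j)) (hSSb j)
          _ ≤ aNorm A (TT i) * aNorm A (G i j) * aNorm A (SS j) :=
              mul_le_mul_of_nonneg_right (aNorm_mul_le (hTTb i) (hGb i j)) (aNorm_nonneg A _)
          _ ≤ aNorm A (TT i) * (lam ^ (n + 1) * Kv) * aNorm A (SS j) := by
              apply mul_le_mul_of_nonneg_right _ (aNorm_nonneg A _)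
              exact mul_le_mul_of_nonneg_left (hGij i j) (aNorm_nonneg A _)
          _ = aNorm A (TT i) * aNorm A (SS j) * (lam ^ (n + 1) * Kv) := by ring
      have ab : ∀ i j, ABounded A (TT i * G i j * SS j) :=
        fun i j => ((hTTb i).mul (hGb i j)).mul (hSSb j)
      have hsum : aNorm A (X ^ (n + 2)) ≤
          aNorm A (TT true * G true true * SS true) + aNorm A (TT true * G true false * SS false)
          + aNorm A (TT false * G false true * SS true)
          + aNorm A (TT false * G false false * SS false) := by
        rw [hGeq]
        calc aNorm A (TT true * G true true * SS true + TT true * G true false * SS false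
              + TT false * G false true * SS true + TT false * G false false * SS false)
            ≤ aNorm A (TT true * G true true * SS true + TT true * G true false * SS false
              + TT false * G false true * SS true) + aNorm A (TT false * G false false * SS false) :=
              aNorm_add_le' hA (((ab true true).add hA (ab true false)).add hA (ab false true))
                (ab false false)
          _ ≤ aNorm A (TT true * G true true * SS true + TT true * G true false * SS false)
              + aNorm A (TT false * G false true * SS true)
              + aNorm A (TT false * G false false * SS false) := by
              have := aNorm_add_le' hA ((ab true true).add hA (ab true false)) (ab false true)
              linarith
          _ ≤ _ := by
              have := aNorm_add_le' hA (ab true true) (ab true false)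
              linarith
      have h11 := hterm true true
      have h10 := hterm true false
      have h01 := hterm false true
      have h00 := hterm false false
      simp only [hTT, hSS, cond_true, cond_false] at h11 h10 h01 h00
      have hfinal : aNorm A T₁ * aNorm A S₁ * (lam ^ (n + 1) * Kv)
          + aNorm A T₁ * aNorm A S₂ * (lam ^ (n + 1) * Kv)
          + aNorm A T₂ * aNorm A S₁ * (lam ^ (n + 1) * Kv)
          + aNorm A T₂ * aNorm A S₂ * (lam ^ (n + 1) * Kv) ≤ Cst * lam ^ (n + 1) := by
        rw [hCst]; nlinarith [hlp]
      have hsum2 : aNorm A (TT true * G true true * SS true)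
          + aNorm A (TT true * G true false * SS false)
          + aNorm A (TT false * G false true * SS true)
          + aNorm A (TT false * G false false * SS false) ≤ Cst * lam ^ (n + 1) := by
        simp only [hTT, hSS, cond_true, cond_false]
        linarith [h11, h10, h01, h00]
      linarith [hsum, hsum2]
    have := specRad_le_of_bound A X hCpos hlam_pos hbound
    calc aSpecRad A X ≤ lam := this
      _ = lamf ε := by rw [hlamf, hlamdef, hqdef]
  -- limit as ε → 0⁺
  have hcont : Continuous lamf := by
    rw [hlamf]
    apply Continuous.div_const
    apply Continuous.add
    · fun_prop
    · exact Real.continuous_sqrt.comp (by fun_prop)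
  have hlim : Filter.Tendsto lamf (nhdsWithin 0 (Set.Ioi 0)) (nhds (lamf 0)) :=
    (hcont.tendsto 0).mono_left nhdsWithin_le_nhds
  have hev : ∀ᶠ ε in nhdsWithin (0 : ℝ) (Set.Ioi 0), aSpecRad A X ≤ lamf ε :=
    eventually_nhdsWithin_of_forall fun ε hε => main ε hε
  have hfin : aSpecRad A X ≤ lamf 0 := ge_of_tendsto hlim hev
  have h0 : lamf 0 = (a + d + Real.sqrt ((a - d) ^ 2 + 4 * b * c)) / 2 := by
    rw [hlamf]; norm_num
  linarith [hfin, h0.le, h0.ge]
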